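/- Let ℓ ≥ 1 be an integer. In ℚ[x,y,z] set ρ = z·(z − ℓ²x + ℓy)·∏_{i=1}^{ℓ−1}((z − i²x)² − i²y²) (a homogeneous polynomial of degree 2ℓ) and Π = ∏_{i=1}^{ℓ}((z − i²x)² − i²y²) (also homogeneous of degree 2ℓ). Suppose c ∈ ℚ and h₁, h₂ ∈ ℚ[x,y,z] are homogeneous of degree 2ℓ − 2, and that the following three elements lie in the principal ideal ⟨ρ⟩: z·h₁, z·h₂, and c·Π − x²·h₁ − (y² + 2xz)·h₂. Then c = 0, h₁ = 0, and h₂ = 0. -/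

import Mathlib

open MvPolynomial Finset

/-- If `ρ` is homogeneous of degree `n`, `p` is homogeneous of degree `m < n`,
and `ρ ∣ p`, then `p = 0`. -/
lemma aux_hom_dvd_eq_zero {σ : Type*} {n m : ℕ} {ρ p : MvPolynomial σ ℚ}
    (hρ : ρ.IsHomogeneous n) (hp : p.IsHomogeneous m) (hmn : m < n)
    (hdvd : ρ ∣ p) : p = 0 := by
  obtain ⟨q, rfl⟩ := hdvd
  have h1 : ρ * q = ∑ i ∈ range (q.totalDegree + 1),
      ρ * homogeneousComponent i q := by
    rw [← Finset.mul_sum, sum_homogeneousComponent]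
  calc ρ * q = homogeneousComponent m (ρ * q) := by
        rw [homogeneousComponent_of_mem ((mem_homogeneousSubmodule _ _).mpr hp),
          if_pos rfl]
    _ = ∑ i ∈ range (q.totalDegree + 1),
        homogeneousComponent m (ρ * homogeneousComponent i q) := by
        conv_lhs => rw [h1]
        rw [map_sum]
    _ = 0 := Finset.sum_eq_zero fun i _ => by
        have hhi : (ρ * homogeneousComponent i q).IsHomogeneous (n + i) :=
          hρ.mul (homogeneousComponent_isHomogeneous i q)
        rw [homogeneousComponent_of_mem
          ((mem_homogeneousSubmodule _ _).mpr hhi), if_neg (by omega)]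

lemma aux_fac_hom (i : ℕ) :
    (((X 2 - C ((i : ℚ) ^ 2) * X 0) ^ 2 - C ((i : ℚ) ^ 2) * X 1 ^ 2 :
      MvPolynomial (Fin 3) ℚ)).IsHomogeneous 2 := by
  have a : ((X 2 - C ((i : ℚ) ^ 2) * X 0 : MvPolynomial (Fin 3) ℚ)).IsHomogeneous 1 :=
    (isHomogeneous_X _ 2).sub (isHomogeneous_C_mul_X _ 0)
  have b : ((X 2 - C ((i : ℚ) ^ 2) * X 0 : MvPolynomial (Fin 3) ℚ) ^ 2).IsHomogeneous 2 := by
    simpa using a.pow 2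
  exact b.sub (isHomogeneous_C_mul_X_pow _ 1 2)

theorem koszul_closed_classes_vanish (ℓ : ℕ) (hℓ : 1 ≤ ℓ)
    (ρ P : MvPolynomial (Fin 3) ℚ)
    (hρ : ρ = X 2 * (X 2 - C ((ℓ : ℚ) ^ 2) * X 0 + C (ℓ : ℚ) * X 1) *
        ∏ i ∈ Icc 1 (ℓ - 1),
          ((X 2 - C ((i : ℚ) ^ 2) * X 0) ^ 2 - C ((i : ℚ) ^ 2) * X 1 ^ 2))
    (hP : P = ∏ i ∈ Icc 1 ℓ,
        ((X 2 - C ((i : ℚ) ^ 2) * X 0) ^ 2 - C ((i : ℚ) ^ 2) * X 1 ^ 2))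
    (c : ℚ) (h₁ h₂ : MvPolynomial (Fin 3) ℚ)
    (hh₁ : h₁.IsHomogeneous (2 * ℓ - 2)) (hh₂ : h₂.IsHomogeneous (2 * ℓ - 2))
    (m₁ : X 2 * h₁ ∈ Ideal.span {ρ})
    (m₂ : X 2 * h₂ ∈ Ideal.span {ρ})
    (m₃ : C c * P - X 0 ^ 2 * h₁ - (X 1 ^ 2 + 2 * X 0 * X 2) * h₂ ∈
      Ideal.span {ρ}) :
    c = 0 ∧ h₁ = 0 ∧ h₂ = 0 := by
  -- ρ is homogeneous of degree 2ℓ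
  have hρhom : ρ.IsHomogeneous (2 * ℓ) := by
    rw [hρ]
    have h2 : ((∏ i ∈ Icc 1 (ℓ - 1),
        ((X 2 - C ((i : ℚ) ^ 2) * X 0) ^ 2 - C ((i : ℚ) ^ 2) * X 1 ^ 2) :
        MvPolynomial (Fin 3) ℚ)).IsHomogeneous (2 * (ℓ - 1)) := by
      have := IsHomogeneous.prod (Icc 1 (ℓ - 1))
        (fun i : ℕ => ((X 2 - C ((i : ℚ) ^ 2) * X 0) ^ 2 - C ((i : ℚ) ^ 2) * X 1 ^ 2 :
          MvPolynomial (Fin 3) ℚ)) (fun _ => 2) (fun i _ => aux_fac_hom i)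
      have hsum : (∑ _i ∈ Icc 1 (ℓ - 1), 2) = 2 * (ℓ - 1) := by
        rw [Finset.sum_const, Nat.card_Icc, smul_eq_mul]
        omega
      rwa [hsum] at this
    have h1 : ((X 2 * (X 2 - C ((ℓ : ℚ) ^ 2) * X 0 + C (ℓ : ℚ) * X 1) :
        MvPolynomial (Fin 3) ℚ)).IsHomogeneous 2 :=
      (isHomogeneous_X _ 2).mul
        (((isHomogeneous_X _ 2).sub (isHomogeneous_C_mul_X _ 0)).add
          (isHomogeneous_C_mul_X _ 1))
    have := h1.mul h2
    have he : 2 + 2 * (ℓ - 1) = 2 * ℓ := by omega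
    rwa [he] at this
  have hd1 : 1 + (2 * ℓ - 2) < 2 * ℓ := by omega
  have hX2 : (X 2 : MvPolynomial (Fin 3) ℚ) ≠ 0 := X_ne_zero 2
  -- h₁ = 0 and h₂ = 0
  have e₁ : h₁ = 0 := by
    have := aux_hom_dvd_eq_zero hρhom ((isHomogeneous_X _ 2).mul hh₁) hd1
      (Ideal.mem_span_singleton.mp m₁)
    rcases mul_eq_zero.mp this with h | h
    · exact absurd h hX2
    · exact h
  have e₂ : h₂ = 0 := by
    have := aux_hom_dvd_eq_zero hρhom ((isHomogeneous_X _ 2).mul hh₂) hd1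
      (Ideal.mem_span_singleton.mp m₂)
    rcases mul_eq_zero.mp this with h | h
    · exact absurd h hX2
    · exact h
  refine ⟨?_, e₁, e₂⟩
  -- now m₃ : C c * P ∈ ⟨ρ⟩; evaluate at (1,0,0)
  rw [e₁, e₂] at m₃
  simp only [mul_zero, sub_zero] at m₃
  obtain ⟨q, hq⟩ := Ideal.mem_span_singleton.mp m₃
  have hev := congrArg (eval ![1, 0, 0]) hq
  rw [hρ, hP] at hev
  simp only [map_mul, map_sub, map_add, map_pow, eval_X, eval_C, map_prod,
    Matrix.cons_val_zero, Matrix.cons_val_one, Matrix.head_cons,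
    Matrix.cons_val_two, Matrix.tail_cons] at hev
  -- LHS: c * ∏ i⁴ ; RHS: 0
  have hPne : (∏ i ∈ Icc 1 ℓ, ((0 - (i : ℚ) ^ 2 * 1) ^ 2 - (i : ℚ) ^ 2 * 0 ^ 2)) ≠ 0 := by
    rw [Finset.prod_ne_zero_iff]
    intro i hi
    have hi1 : 1 ≤ i := (Finset.mem_Icc.mp hi).1
    have : (i : ℚ) ≠ 0 := by positivity
    have : (i : ℚ) ^ 2 ≠ 0 := pow_ne_zero 2 this
    intro hcon
    apply this
    nlinarith [sq_nonneg ((i : ℚ) ^ 2)]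
  simp only [zero_mul, mul_zero] at hev
  -- hev : c * ∏ ... = 0 * ... or similar; finish
  have : c * (∏ i ∈ Icc 1 ℓ, ((0 - (i : ℚ) ^ 2 * 1) ^ 2 - (i : ℚ) ^ 2 * 0 ^ 2)) = 0 := by
    linarith [hev]
  exact (mul_eq_zero.mp this).resolve_right hPne
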